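/- Let p be a pattern and i a label in lbs(p) \ sing(p). Define fix(p,i) = p ∪ {{i}} and forget(p,i) = {S \ {i} : S ∈ p}. Then the set {fix(p,i), forget(p,i)} represents p: both are dominated by p, and every pattern q consistent with p is consistent with fix(p,i) or with forget(p,i). Concretely, if i ∈ lbs(q) then fix(p,i) ∼ q, and if i ∉ lbs(q) then forget(p,i) ∼ q. -/

import Mathlib

open Finset
open scoped Classical

namespace PatternST

variable {α : Type*} [DecidableEq α]

/-- `p` is a pattern over ground set `U` with zero element `z`:
a family of subsets of `U ∪ {z}` with exactly one member containing `z`. -/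
def IsPattern (z : α) (U : Finset α) (p : Finset (Finset α)) : Prop :=
  (∀ S ∈ p, S ⊆ insert z U) ∧ ∃! S, S ∈ p ∧ z ∈ S

/-- Two sets are linked if one belongs to `p`, the other to `q`, and they intersect. -/
def linkRel (p q : Finset (Finset α)) (S T : Finset α) : Prop :=
  ((S ∈ p ∧ T ∈ q) ∨ (S ∈ q ∧ T ∈ p)) ∧ (S ∩ T).Nonempty

/-- Reflexive-transitive (and, by symmetry of `linkRel`, symmetric) closure. -/
def conn (p q : Finset (Finset α)) : Finset α → Finset α → Prop :=
  Relation.ReflTransGen (linkRel p q)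

/-- The join `p ⋈ q`: unions of the equivalence classes of `conn` on `p ∪ q`. -/
noncomputable def pjoin (p q : Finset (Finset α)) : Finset (Finset α) :=
  (p ∪ q).image fun S => ((p ∪ q).filter fun T => conn p q S T).sup id

/-- `p` and `q` are consistent if `p ⋈ q` consists of a single set. -/
def consistent (p q : Finset (Finset α)) : Prop := (pjoin p q).card = 1

/-- The labels (elements of `U`, i.e. everything except `z`) occurring in `p`. -/
def lbs (z : α) (p : Finset (Finset α)) : Finset α := (p.sup id).erase z

/-- The labels appearing as singletons in `p`. -/
def sing (z : α) (p : Finset (Finset α)) : Finset α :=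
  (lbs z p).filter fun u => ({u} : Finset α) ∈ p

/-- A pattern is complete if every occurring label occurs as a singleton. -/
def Complete (z : α) (p : Finset (Finset α)) : Prop := lbs z p = sing z p

section Helpers

variable {z : α} {p q : Finset (Finset α)}

lemma linkRel_symm : Symmetric (linkRel p q) := by
  rintro S T ⟨h, x, hx⟩
  refine ⟨by tauto, x, ?_⟩
  rwa [Finset.inter_comm]

lemma conn_symm {S T : Finset α} (h : conn p q S T) : conn p q T S :=
  haveI : Std.Symm (linkRel p q) := ⟨fun _ _ h => linkRel_symm h⟩
  Std.Symm.symm (r := Relation.ReflTransGen (linkRel p q)) _ _ h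

lemma consistent_of_conn (hne : (p ∪ q).Nonempty)
    (h : ∀ S ∈ p ∪ q, ∀ T ∈ p ∪ q, conn p q S T) : consistent p q := by
  have himg : ∀ S ∈ p ∪ q, ((p ∪ q).filter fun T => conn p q S T) = p ∪ q :=
    fun S hS => Finset.filter_true_of_mem (fun T hT => h S hS T hT)
  rw [consistent, pjoin, Finset.card_eq_one]
  refine ⟨(p ∪ q).sup id, ?_⟩
  ext X
  simp only [Finset.mem_image, Finset.mem_singleton]
  constructor
  · rintro ⟨S, hS, rfl⟩
    rw [himg S hS]
  · rintro rfl
    exact ⟨hne.choose, hne.choose_spec, by rw [himg _ hne.choose_spec]⟩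

lemma conn_of_consistent {Sp Sq : Finset α} (hSp : Sp ∈ p) (hzp : z ∈ Sp)
    (hSq : Sq ∈ q) (hzq : z ∈ Sq) (h : consistent p q) :
    ∀ S ∈ p ∪ q, conn p q S Sq := by
  obtain ⟨X, hX⟩ := Finset.card_eq_one.mp h
  have hf : ∀ T ∈ p ∪ q, ((p ∪ q).filter fun R => conn p q T R).sup id = X := by
    intro T hT
    have : ((p ∪ q).filter fun R => conn p q T R).sup id ∈ pjoin p q :=
      Finset.mem_image_of_mem _ hT
    rwa [hX, Finset.mem_singleton] at this
  intro S hS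
  have hzX : z ∈ X := by
    rw [← hf Sq (Finset.mem_union_right _ hSq)]
    exact Finset.mem_sup.mpr ⟨Sq, Finset.mem_filter.mpr
      ⟨Finset.mem_union_right _ hSq, Relation.ReflTransGen.refl⟩, hzq⟩
  have hz' : z ∈ ((p ∪ q).filter fun R => conn p q S R).sup id := by
    rw [hf S hS]; exact hzX
  obtain ⟨R, hR, hzR⟩ := Finset.mem_sup.mp hz'
  obtain ⟨hRmem, hconn⟩ := Finset.mem_filter.mp hR
  rcases Finset.mem_union.mp hRmem with hRp | hRq
  · exact hconn.tail ⟨Or.inl ⟨hRp, hSq⟩, z, Finset.mem_inter.mpr ⟨hzR, hzq⟩⟩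
  · exact (hconn.tail ⟨Or.inr ⟨hRq, hSp⟩, z, Finset.mem_inter.mpr ⟨hzR, hzp⟩⟩).tail
      ⟨Or.inl ⟨hSp, hSq⟩, z, Finset.mem_inter.mpr ⟨hzp, hzq⟩⟩

lemma conn_all {Sq : Finset α} (hSq : Sq ∈ p ∪ q)
    (h : ∀ S ∈ p ∪ q, conn p q S Sq) :
    ∀ S ∈ p ∪ q, ∀ T ∈ p ∪ q, conn p q S T :=
  fun S hS T hT => (h S hS).trans (conn_symm (h T hT))

lemma fix_dominated {i : α} {A Sp Sq : Finset α}
    (hAp : A ∈ p) (hiA : i ∈ A) (hip : ({i} : Finset α) ∉ p)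
    (hSp : Sp ∈ p) (hzp : z ∈ Sp) (hSq : Sq ∈ q) (hzq : z ∈ Sq)
    (h : consistent (insert ({i} : Finset α) p) q) : consistent p q := by
  set r : Finset α → Finset α :=
    fun X => if X = ({i} : Finset α) ∧ ({i} : Finset α) ∉ q then A else X with hr
  have hrq : ∀ Y ∈ q, r Y = Y := by
    intro Y hY
    simp only [hr]
    split_ifs with hc
    · exact absurd (hc.1 ▸ hY) hc.2
    · rfl
  have hrp : ∀ X ∈ p, r X = X := by
    intro X hX
    simp only [hr]
    split_ifs with hc
    · exact absurd (hc.1 ▸ hX) hip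
    · rfl
  have hedge : ∀ X Y, X ∈ insert ({i} : Finset α) p → Y ∈ q → (X ∩ Y).Nonempty →
      conn p q (r X) (r Y) := by
    rintro X Y hX hY ⟨x, hx⟩
    rw [Finset.mem_inter] at hx
    rcases Finset.mem_insert.mp hX with rfl | hXp
    · have hxi : x = i := by simpa using hx.1
      have hiY : i ∈ Y := hxi ▸ hx.2
      rw [hrq Y hY]
      by_cases hiq : ({i} : Finset α) ∈ q
      · rw [hrq _ hiq]
        exact Relation.ReflTransGen.head
          ⟨Or.inr ⟨hiq, hAp⟩, i, Finset.mem_inter.mpr ⟨Finset.mem_singleton_self i, hiA⟩⟩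
          (Relation.ReflTransGen.single
            ⟨Or.inl ⟨hAp, hY⟩, i, Finset.mem_inter.mpr ⟨hiA, hiY⟩⟩)
      · have hrX : r ({i} : Finset α) = A := by simp [hr, hiq]
        rw [hrX]
        exact Relation.ReflTransGen.single
          ⟨Or.inl ⟨hAp, hY⟩, i, Finset.mem_inter.mpr ⟨hiA, hiY⟩⟩
    · rw [hrp X hXp, hrq Y hY]
      exact Relation.ReflTransGen.single
        ⟨Or.inl ⟨hXp, hY⟩, x, Finset.mem_inter.mpr hx⟩
  have htrans : ∀ X Y, conn (insert ({i} : Finset α) p) q X Y → conn p q (r X) (r Y) := by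
    intro X Y hXY
    induction hXY with
    | refl => exact Relation.ReflTransGen.refl
    | tail _ h2 ih =>
      obtain ⟨hor, hne⟩ := h2
      rcases hor with ⟨hl, hrr⟩ | ⟨hl, hrr⟩
      · exact ih.trans (hedge _ _ hl hrr hne)
      · exact ih.trans (conn_symm (hedge _ _ hrr hl (by rwa [Finset.inter_comm])))
  have hhub := conn_of_consistent (Finset.mem_insert_of_mem hSp) hzp hSq hzq h
  apply consistent_of_conn ⟨Sq, Finset.mem_union_right _ hSq⟩
  apply conn_all (Finset.mem_union_right _ hSq)
  intro S hS
  have hS' : S ∈ insert ({i} : Finset α) p ∪ q := by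
    rcases Finset.mem_union.mp hS with h1 | h1
    · exact Finset.mem_union_left _ (Finset.mem_insert_of_mem h1)
    · exact Finset.mem_union_right _ h1
  have hrS : r S = S := by
    rcases Finset.mem_union.mp hS with h1 | h1
    · exact hrp S h1
    · exact hrq S h1
  have := htrans _ _ (hhub S hS')
  rwa [hrS, hrq Sq hSq] at this

lemma forget_dominated {i : α} {Sp Sq : Finset α}
    (hSp : Sp ∈ p) (hzp : z ∈ Sp) (hSq : Sq ∈ q) (hzq : z ∈ Sq) (hiz : i ≠ z)
    (h : consistent (p.image fun S => S.erase i) q) : consistent p q := by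
  set P2 := p.image fun S => S.erase i with hP2
  have hzp2 : z ∈ Sp.erase i := Finset.mem_erase.mpr ⟨Ne.symm hiz, hzp⟩
  set L : Finset α → Finset α → Prop :=
    fun X C => (X ∈ q ∧ C = X) ∨ (C ∈ p ∧ X = C.erase i) with hL
  have key : ∀ X Y, conn P2 q X Y → ∀ C, L X C → ∃ D, L Y D ∧ conn p q C D := by
    intro X Y hXY
    induction hXY with
    | refl => exact fun C hC => ⟨C, hC, Relation.ReflTransGen.refl⟩
    | @tail Y Z _ h2 ih =>
      intro C hC
      obtain ⟨B, hLB, hCB⟩ := ih C hC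
      obtain ⟨hor, x, hx⟩ := h2
      rw [Finset.mem_inter] at hx
      rcases hor with ⟨hY2, hZq⟩ | ⟨hYq, hZ2⟩
      · obtain ⟨B', hB'p, hYB'⟩ := Finset.mem_image.mp hY2
        have hxB' : x ∈ B' := Finset.mem_of_mem_erase (by rw [hYB']; exact hx.1)
        rcases hLB with ⟨hYq, hBY⟩ | ⟨hBp, hYB⟩
        · subst hBY
          refine ⟨Z, Or.inl ⟨hZq, rfl⟩, ?_⟩
          exact (hCB.tail ⟨Or.inr ⟨hYq, hB'p⟩, x, Finset.mem_inter.mpr ⟨hx.1, hxB'⟩⟩).tail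
            ⟨Or.inl ⟨hB'p, hZq⟩, x, Finset.mem_inter.mpr ⟨hxB', hx.2⟩⟩
        · have hxB : x ∈ B := Finset.mem_of_mem_erase (by rw [← hYB]; exact hx.1)
          exact ⟨Z, Or.inl ⟨hZq, rfl⟩,
            hCB.tail ⟨Or.inl ⟨hBp, hZq⟩, x, Finset.mem_inter.mpr ⟨hxB, hx.2⟩⟩⟩
      · obtain ⟨C', hC'p, hZC'⟩ := Finset.mem_image.mp hZ2
        have hxC' : x ∈ C' := Finset.mem_of_mem_erase (by rw [hZC']; exact hx.2)
        refine ⟨C', Or.inr ⟨hC'p, hZC'.symm⟩, ?_⟩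
        rcases hLB with ⟨hYq', hBY⟩ | ⟨hBp, hYB⟩
        · subst hBY
          exact hCB.tail ⟨Or.inr ⟨hYq, hC'p⟩, x, Finset.mem_inter.mpr ⟨hx.1, hxC'⟩⟩
        · have hxB : x ∈ B := Finset.mem_of_mem_erase (by rw [← hYB]; exact hx.1)
          exact (hCB.tail ⟨Or.inl ⟨hBp, hYq⟩, x, Finset.mem_inter.mpr ⟨hxB, hx.1⟩⟩).tail
            ⟨Or.inr ⟨hYq, hC'p⟩, x, Finset.mem_inter.mpr ⟨hx.1, hxC'⟩⟩
  have hhub := conn_of_consistent (p := P2) (Finset.mem_image_of_mem _ hSp) hzp2 hSq hzq h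
  apply consistent_of_conn ⟨Sq, Finset.mem_union_right _ hSq⟩
  apply conn_all (Finset.mem_union_right _ hSq)
  intro S hS
  have finish : ∀ X, L X S → X ∈ P2 ∪ q → conn p q S Sq := by
    intro X hLX hXmem
    obtain ⟨D, hLD, hSD⟩ := key _ _ (hhub X hXmem) S hLX
    rcases hLD with ⟨_, hDSq⟩ | ⟨hDp, hSqD⟩
    · exact hDSq ▸ hSD
    · have hzD : z ∈ D := Finset.mem_of_mem_erase (by rw [← hSqD]; exact hzq)
      exact hSD.tail ⟨Or.inl ⟨hDp, hSq⟩, z, Finset.mem_inter.mpr ⟨hzD, hzq⟩⟩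
  rcases Finset.mem_union.mp hS with hS1 | hS1
  · exact finish (S.erase i) (Or.inr ⟨hS1, rfl⟩)
      (Finset.mem_union_left _ (Finset.mem_image_of_mem _ hS1))
  · exact finish S (Or.inl ⟨hS1, rfl⟩) (Finset.mem_union_right _ hS1)

lemma fix_of_consistent {i : α} {B Sp Sq : Finset α}
    (hB : B ∈ q) (hiB : i ∈ B)
    (hSp : Sp ∈ p) (hzp : z ∈ Sp) (hSq : Sq ∈ q) (hzq : z ∈ Sq)
    (h : consistent p q) : consistent (insert ({i} : Finset α) p) q := by
  have hhub := conn_of_consistent hSp hzp hSq hzq h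
  have hmono : ∀ {X Y : Finset α}, conn p q X Y → conn (insert ({i} : Finset α) p) q X Y := by
    intro X Y hxy
    refine Relation.ReflTransGen.mono ?_ X Y hxy
    rintro S T ⟨hor, hne⟩
    refine ⟨?_, hne⟩
    rcases hor with ⟨h1, h2⟩ | ⟨h1, h2⟩
    · exact Or.inl ⟨Finset.mem_insert_of_mem h1, h2⟩
    · exact Or.inr ⟨h1, Finset.mem_insert_of_mem h2⟩
  apply consistent_of_conn ⟨Sq, Finset.mem_union_right _ hSq⟩
  apply conn_all (Finset.mem_union_right _ hSq)
  intro S hS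
  rcases Finset.mem_union.mp hS with hS1 | hS1
  · rcases Finset.mem_insert.mp hS1 with rfl | hSp'
    · exact (Relation.ReflTransGen.single
        ⟨Or.inl ⟨Finset.mem_insert_self _ _, hB⟩, i,
          Finset.mem_inter.mpr ⟨Finset.mem_singleton_self i, hiB⟩⟩).trans
        (hmono (hhub B (Finset.mem_union_right _ hB)))
    · exact hmono (hhub S (Finset.mem_union_left _ hSp'))
  · exact hmono (hhub S (Finset.mem_union_right _ hS1))

lemma forget_of_consistent {i : α} {Sp Sq : Finset α}
    (hq : ∀ B ∈ q, i ∉ B)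
    (hSp : Sp ∈ p) (hzp : z ∈ Sp) (hSq : Sq ∈ q) (hzq : z ∈ Sq)
    (h : consistent p q) : consistent (p.image fun S => S.erase i) q := by
  have hhub := conn_of_consistent hSp hzp hSq hzq h
  have hmap : ∀ {X Y : Finset α}, conn p q X Y →
      conn (p.image fun S => S.erase i) q (X.erase i) (Y.erase i) := by
    intro X Y hxy
    refine Relation.ReflTransGen.lift (fun S : Finset α => S.erase i) ?_ X Y hxy
    rintro S T ⟨hor, x, hx⟩
    rw [Finset.mem_inter] at hx
    rcases hor with ⟨h1, h2⟩ | ⟨h1, h2⟩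
    · have hxi : x ≠ i := fun e => hq T h2 (e ▸ hx.2)
      exact ⟨Or.inl ⟨Finset.mem_image_of_mem _ h1,
          by simpa [Finset.erase_eq_of_notMem (hq T h2)] using h2⟩,
        x, Finset.mem_inter.mpr ⟨Finset.mem_erase.mpr ⟨hxi, hx.1⟩,
          Finset.mem_erase.mpr ⟨hxi, hx.2⟩⟩⟩
    · have hxi : x ≠ i := fun e => hq S h1 (e ▸ hx.1)
      exact ⟨Or.inr ⟨by simpa [Finset.erase_eq_of_notMem (hq S h1)] using h1,
          Finset.mem_image_of_mem _ h2⟩,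
        x, Finset.mem_inter.mpr ⟨Finset.mem_erase.mpr ⟨hxi, hx.1⟩,
          Finset.mem_erase.mpr ⟨hxi, hx.2⟩⟩⟩
  apply consistent_of_conn ⟨Sq, Finset.mem_union_right _ hSq⟩
  apply conn_all (Finset.mem_union_right _ hSq)
  intro S hS
  have heSq : Sq.erase i = Sq := Finset.erase_eq_of_notMem (hq Sq hSq)
  rcases Finset.mem_union.mp hS with hS1 | hS1
  · obtain ⟨S', hS'p, rfl⟩ := Finset.mem_image.mp hS1
    have := hmap (hhub S' (Finset.mem_union_left _ hS'p))
    rwa [heSq] at this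
  · have := hmap (hhub S (Finset.mem_union_right _ hS1))
    rwa [heSq, Finset.erase_eq_of_notMem (hq S hS1)] at this

end Helpers

/-- `{fix(p,i), forget(p,i)}` represents `p`: both are dominated by `p`, and every
pattern consistent with `p` is consistent with the fix (if `i` occurs in it) or
with the forget (if `i` does not occur in it). -/
theorem fix_forget_represent (z : α) (U : Finset α) (p : Finset (Finset α))
    (hp : IsPattern z U p) (i : α) (hi : i ∈ lbs z p \ sing z p) :
    (∀ q : Finset (Finset α), IsPattern z U q →
      consistent (insert ({i} : Finset α) p) q → consistent p q) ∧
    (∀ q : Finset (Finset α), IsPattern z U q →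
      consistent (p.image fun S => S.erase i) q → consistent p q) ∧
    (∀ q : Finset (Finset α), IsPattern z U q → consistent p q →
      (i ∈ lbs z q → consistent (insert ({i} : Finset α) p) q) ∧
      (i ∉ lbs z q → consistent (p.image fun S => S.erase i) q)) := by
  obtain ⟨hil, hins⟩ := Finset.mem_sdiff.mp hi
  have hiz : i ≠ z := (Finset.mem_erase.mp hil).1
  have hisup : i ∈ p.sup id := (Finset.mem_erase.mp hil).2
  obtain ⟨A, hAp, hiA⟩ := Finset.mem_sup.mp hisup
  have hip : ({i} : Finset α) ∉ p := fun hmem => hins (Finset.mem_filter.mpr ⟨hil, hmem⟩)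
  obtain ⟨Sp, ⟨hSp, hzp⟩, -⟩ := hp.2
  refine ⟨?_, ?_, ?_⟩
  · intro q hq hc
    obtain ⟨Sq, ⟨hSq, hzq⟩, -⟩ := hq.2
    exact fix_dominated hAp hiA hip hSp hzp hSq hzq hc
  · intro q hq hc
    obtain ⟨Sq, ⟨hSq, hzq⟩, -⟩ := hq.2
    exact forget_dominated hSp hzp hSq hzq hiz hc
  · intro q hq hc
    obtain ⟨Sq, ⟨hSq, hzq⟩, -⟩ := hq.2
    constructor
    · intro hiq
      obtain ⟨B, hB, hiB⟩ := Finset.mem_sup.mp (Finset.mem_erase.mp hiq).2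
      exact fix_of_consistent hB hiB hSp hzp hSq hzq hc
    · intro hiq
      have hnq : ∀ B ∈ q, i ∉ B := fun B hB hiB =>
        hiq (Finset.mem_erase.mpr ⟨hiz, Finset.mem_sup.mpr ⟨B, hB, hiB⟩⟩)
      exact forget_of_consistent hnq hSp hzp hSq hzq hc

end PatternST
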